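/- Two distinct τ-runs of a string S can overlap in at most τ/2 positions: if R1 = S[i1..j1] and R2 = S[i2..j2] are distinct τ-runs with i1 ≤ i2, then j1 - i2 + 1 ≤ τ/2. -/

import Mathlib

/-- `P` occurs at (0-indexed) position `i` of `T`. -/
def occursAt {α : Type*} (P T : List α) (i : ℕ) : Prop :=
  (T.drop i).take P.length = P

/-- `ρ` is a period of `P`. -/
def isPeriod {α : Type*} (P : List α) (ρ : ℕ) : Prop :=
  0 < ρ ∧ ∀ k, k + ρ < P.length → P[k]? = P[k + ρ]?

/-- The smallest period of `P`. -/
noncomputable def per {α : Type*} (P : List α) : ℕ :=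
  sInf {ρ | isPeriod P ρ}

/-- The fragment of `S` on (0-indexed, inclusive) positions `i..j`. -/
def frag {α : Type*} (S : List α) (i j : ℕ) : List α :=
  (S.drop i).take (j - i + 1)

/-- The fragment `S[i..j]` (0-indexed, inclusive) is a `τ`-run of `S`:
length greater than `3τ`, smallest period at most `τ/4`, and maximal, i.e.,
it cannot be extended in either direction without its smallest period changing. -/
def isTauRun {α : Type*} (S : List α) (τ i j : ℕ) : Prop :=
  i ≤ j ∧ j < S.length ∧ 3 * τ < j - i + 1 ∧ per (frag S i j) ≤ τ / 4 ∧
  (i = 0 ∨ per (frag S (i - 1) j) ≠ per (frag S i j)) ∧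
  (j = S.length - 1 ∨ per (frag S i (j + 1)) ≠ per (frag S i j))

/- ---------- auxiliary lemmas ---------- -/

lemma frag_length {α : Type*} (S : List α) {i j : ℕ} (hij : i ≤ j) (hj : j < S.length) :
    (frag S i j).length = j - i + 1 := by
  simp only [frag, List.length_take, List.length_drop]
  omega

lemma frag_get? {α : Type*} (S : List α) {i j k : ℕ} (hk : k < j - i + 1) :
    (frag S i j)[k]? = S[i + k]? := by
  simp only [frag, List.getElem?_take_of_lt hk, List.getElem?_drop]

lemma isPeriod_frag_iff {α : Type*} (S : List α) {i j ρ : ℕ} (hij : i ≤ j) (hj : j < S.length) :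
    isPeriod (frag S i j) ρ ↔
      0 < ρ ∧ ∀ x, i ≤ x → x + ρ ≤ j → S[x]? = S[x + ρ]? := by
  unfold isPeriod
  rw [frag_length S hij hj]
  constructor
  · rintro ⟨h0, h⟩
    refine ⟨h0, fun x hx1 hx2 => ?_⟩
    have := h (x - i) (by omega)
    rw [frag_get? S (by omega), frag_get? S (by omega)] at this
    have e1 : i + (x - i) = x := by omega
    have e2 : i + (x - i + ρ) = x + ρ := by omega
    rwa [e1, e2] at this
  · rintro ⟨h0, h⟩
    refine ⟨h0, fun k hk => ?_⟩
    rw [frag_get? S (by omega), frag_get? S (by omega)]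
    have := h (i + k) (by omega) (by omega)
    rwa [show i + k + ρ = i + (k + ρ) by omega] at this

lemma per_isPeriod_frag {α : Type*} (S : List α) {i j : ℕ} (hij : i ≤ j) (hj : j < S.length) :
    isPeriod (frag S i j) (per (frag S i j)) := by
  have hne : {ρ | isPeriod (frag S i j) ρ}.Nonempty := by
    refine ⟨(frag S i j).length, ?_, fun k hk => absurd hk (by omega)⟩
    rw [frag_length S hij hj]; omega
  exact Nat.sInf_mem hne

lemma per_le_of_isPeriod {α : Type*} (P : List α) {ρ : ℕ} (h : isPeriod P ρ) : per P ≤ ρ :=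
  Nat.sInf_le h

/-- Fine–Wilf (weak form) for functions on an interval `[a, b]`. -/
lemma fineWilf {β : Type*} (f : ℕ → β) (p q a b : ℕ) (hp : 0 < p) (hq : 0 < q)
    (hlen : a + p + q ≤ b + 1)
    (hP : ∀ x, a ≤ x → x + p ≤ b → f x = f (x + p))
    (hQ : ∀ x, a ≤ x → x + q ≤ b → f x = f (x + q)) :
    ∀ x, a ≤ x → x + Nat.gcd p q ≤ b → f x = f (x + Nat.gcd p q) := by
  rcases lt_trichotomy p q with h | h | h
  · -- reduce q to q - p
    have hQ' : ∀ x, a ≤ x → x + (q - p) ≤ b → f x = f (x + (q - p)) := by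
      intro x hx1 hx2
      rcases le_or_gt (x + q) b with h' | h'
      · have e1 := hQ x hx1 h'
        have e2 := hP (x + (q - p)) (by omega) (by omega)
        rw [show x + (q - p) + p = x + q by omega] at e2
        rw [e1, ← e2]
      · have e1 := hP (x - p) (by omega) (by omega)
        have e2 := hQ (x - p) (by omega) (by omega)
        rw [show x - p + p = x by omega] at e1
        rw [show x - p + q = x + (q - p) by omega] at e2
        rw [← e1, e2]
    have hg : Nat.gcd p q = Nat.gcd p (q - p) := by
      conv_lhs => rw [show q = (q - p) + p by omega]
      rw [Nat.gcd_add_self_right]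
    rw [hg]
    exact fineWilf f p (q - p) a b hp (by omega) (by omega) hP hQ'
  · subst h
    rw [Nat.gcd_self]
    exact hP
  · -- reduce p to p - q
    have hP' : ∀ x, a ≤ x → x + (p - q) ≤ b → f x = f (x + (p - q)) := by
      intro x hx1 hx2
      rcases le_or_gt (x + p) b with h' | h'
      · have e1 := hP x hx1 h'
        have e2 := hQ (x + (p - q)) (by omega) (by omega)
        rw [show x + (p - q) + q = x + p by omega] at e2
        rw [e1, ← e2]
      · have e1 := hQ (x - q) (by omega) (by omega)
        have e2 := hP (x - q) (by omega) (by omega)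
        rw [show x - q + q = x by omega] at e1
        rw [show x - q + p = x + (p - q) by omega] at e2
        rw [← e1, e2]
    have hg : Nat.gcd p q = Nat.gcd (p - q) q := by
      rw [Nat.gcd_comm p q, Nat.gcd_comm (p - q) q]
      conv_lhs => rw [show p = (p - q) + q by omega]
      rw [Nat.gcd_add_self_right]
    rw [hg]
    exact fineWilf f (p - q) q a b (by omega) hq (by omega) hP' hQ
termination_by p + q

/-- A period `g` on a window of length `≥ p + g` inside a string with period `p`
propagates to the whole string. -/
lemma propagate {β : Type*} (f : ℕ → β) (p g iT jT a b : ℕ) (hp : 0 < p) (hg : 0 < g)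
    (hia : iT ≤ a) (hbj : b ≤ jT)
    (hwin : a + p + g ≤ b + 1)
    (hP : ∀ x, iT ≤ x → x + p ≤ jT → f x = f (x + p))
    (hW : ∀ x, a ≤ x → x + g ≤ b → f x = f (x + g)) :
    ∀ x, iT ≤ x → x + g ≤ jT → f x = f (x + g) := by
  intro x hx1 hx2
  rcases lt_or_ge x a with h | h
  · have e1 : f x = f (x + p) := hP x hx1 (by omega)
    have e2 : f (x + g) = f (x + g + p) := hP (x + g) (by omega) (by omega)
    have e3 : f (x + p) = f (x + p + g) :=
      propagate f p g iT jT a b hp hg hia hbj hwin hP hW (x + p) (by omega) (by omega)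
    rw [e1, e2, e3, show x + p + g = x + g + p by omega]
  · rcases le_or_gt (x + g) b with h' | h'
    · exact hW x h h'
    · have e1 : f (x - p) = f x := by
        have := hP (x - p) (by omega) (by omega)
        rwa [show x - p + p = x by omega] at this
      have e2 : f (x - p + g) = f (x + g) := by
        have := hP (x - p + g) (by omega) (by omega)
        rwa [show x - p + g + p = x + g by omega] at this
      have e3 : f (x - p) = f (x - p + g) :=
        propagate f p g iT jT a b hp hg hia hbj hwin hP hW (x - p) (by omega) (by omega)
      rw [← e1, ← e2, e3]
termination_by x => (a - x) + (x + g - b)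
decreasing_by all_goals omega

/-- Two distinct `τ`-runs overlap in at most `τ/2` positions: if
`R₁ = S[i₁..j₁]` and `R₂ = S[i₂..j₂]` are distinct `τ`-runs with `i₁ ≤ i₂`,
then `j₁ - i₂ + 1 ≤ τ/2`. -/
theorem tau_runs_overlap {α : Type*} (S : List α) (τ i₁ j₁ i₂ j₂ : ℕ)
    (hτ : 4 ≤ τ) (h1 : isTauRun S τ i₁ j₁) (h2 : isTauRun S τ i₂ j₂)
    (hne : (i₁, j₁) ≠ (i₂, j₂)) (hle : i₁ ≤ i₂) :
    j₁ + 1 ≤ i₂ + τ / 2 := by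
  by_contra hcon
  have hov : i₂ + τ / 2 ≤ j₁ := by omega
  obtain ⟨hij1, hj1, hlen1, hper1, hleft1, hright1⟩ := h1
  obtain ⟨hij2, hj2, hlen2, hper2, hleft2, hright2⟩ := h2
  set f : ℕ → Option α := fun n => S[n]? with hf
  set p := per (frag S i₁ j₁) with hpdef
  set q := per (frag S i₂ j₂) with hqdef
  have hP0 := (isPeriod_frag_iff S hij1 hj1).1 (per_isPeriod_frag S hij1 hj1)
  have hQ0 := (isPeriod_frag_iff S hij2 hj2).1 (per_isPeriod_frag S hij2 hj2)
  obtain ⟨hp, hP⟩ := hP0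
  obtain ⟨hq, hQ⟩ := hQ0
  -- the overlap window
  set a := i₂ with ha
  set b := min j₁ j₂ with hb
  have hwlen : a + p + q ≤ b + 1 := by
    rcases le_total j₁ j₂ with h | h
    · have : min j₁ j₂ = j₁ := min_eq_left h
      omega
    · have : min j₁ j₂ = j₂ := min_eq_right h
      omega
  have hPw : ∀ x, a ≤ x → x + p ≤ b → f x = f (x + p) := fun x hx1 hx2 =>
    hP x (by omega) (by omega)
  have hQw : ∀ x, a ≤ x → x + q ≤ b → f x = f (x + q) := fun x hx1 hx2 =>
    hQ x (by omega) (by omega)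
  set g := Nat.gcd p q with hgdef
  have hg : 0 < g := Nat.gcd_pos_of_pos_left _ hp
  have hgp : g ≤ p := Nat.gcd_le_left _ hp
  have hgq : g ≤ q := Nat.gcd_le_right _ hq
  have hbj1 : b ≤ j₁ := min_le_left _ _
  have hbj2 : b ≤ j₂ := min_le_right _ _
  have hW : ∀ x, a ≤ x → x + g ≤ b → f x = f (x + g) :=
    fineWilf f p q a b hp hq hwlen hPw hQw
  -- R₁ has period g
  have hR1g : ∀ x, i₁ ≤ x → x + g ≤ j₁ → f x = f (x + g) :=
    propagate f p g i₁ j₁ a b hp hg hle hbj1 (by omega) hP hW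
  -- R₂ has period g
  have hR2g : ∀ x, i₂ ≤ x → x + g ≤ j₂ → f x = f (x + g) :=
    propagate f q g i₂ j₂ a b hq hg le_rfl hbj2 (by omega) hQ hW
  have hpg : p = g := by
    have h1 : p ≤ g := per_le_of_isPeriod _ ((isPeriod_frag_iff S hij1 hj1).2 ⟨hg, hR1g⟩)
    have h2 : g ≤ p := Nat.gcd_le_left _ hp
    omega
  have hqg : q = g := by
    have h1 : q ≤ g := per_le_of_isPeriod _ ((isPeriod_frag_iff S hij2 hj2).2 ⟨hg, hR2g⟩)
    have h2 : g ≤ q := Nat.gcd_le_right _ hq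
    omega
  have hpq : p = q := by omega
  rcases Nat.lt_or_ge i₁ i₂ with hi | hi
  · -- extend R₂ to the left: S[i₂-1..j₂] has smallest period q
    have hi2ne : i₂ ≠ 0 := by omega
    have hneq : per (frag S (i₂ - 1) j₂) ≠ q := by
      rcases hleft2 with h | h
      · exact absurd h hi2ne
      · exact h
    have hij' : i₂ - 1 ≤ j₂ := by omega
    -- q is a period of the extension
    have hqper : isPeriod (frag S (i₂ - 1) j₂) q := by
      rw [isPeriod_frag_iff S hij' hj2]
      refine ⟨hq, fun x hx1 hx2 => ?_⟩
      rcases Nat.lt_or_ge x i₂ with hx | hx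
      · have hx' : x = i₂ - 1 := by omega
        rw [← hpq]
        exact hP x (by omega) (by omega)
      · exact hQ x hx hx2
    have hle' : per (frag S (i₂ - 1) j₂) ≤ q := per_le_of_isPeriod _ hqper
    -- the smallest period of the extension is a period of R₂
    have hmem := (isPeriod_frag_iff S hij' hj2).1 (per_isPeriod_frag S hij' hj2)
    have hge' : q ≤ per (frag S (i₂ - 1) j₂) := by
      apply per_le_of_isPeriod
      rw [isPeriod_frag_iff S hij2 hj2]
      exact ⟨hmem.1, fun x hx1 hx2 => hmem.2 x (by omega) hx2⟩
    omega
  · have hii : i₁ = i₂ := by omega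
    have hjj : j₁ ≠ j₂ := by
      intro h; exact hne (by rw [hii, h])
    rcases Nat.lt_or_ge j₁ j₂ with hj | hj
    · -- extend R₁ to the right inside R₂
      have hj1ne : j₁ ≠ S.length - 1 := by omega
      have hneq : per (frag S i₁ (j₁ + 1)) ≠ p := by
        rcases hright1 with h | h
        · exact absurd h hj1ne
        · exact h
      have hij' : i₁ ≤ j₁ + 1 := by omega
      have hj' : j₁ + 1 < S.length := by omega
      have hpper : isPeriod (frag S i₁ (j₁ + 1)) p := by
        rw [isPeriod_frag_iff S hij' hj']
        refine ⟨hp, fun x hx1 hx2 => ?_⟩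
        rw [hpq]
        exact hQ x (by omega) (by omega)
      have hle' : per (frag S i₁ (j₁ + 1)) ≤ p := per_le_of_isPeriod _ hpper
      have hmem := (isPeriod_frag_iff S hij' hj').1 (per_isPeriod_frag S hij' hj')
      have hge' : p ≤ per (frag S i₁ (j₁ + 1)) := by
        apply per_le_of_isPeriod
        rw [isPeriod_frag_iff S hij1 hj1]
        exact ⟨hmem.1, fun x hx1 hx2 => hmem.2 x hx1 (by omega)⟩
      omega
    · -- j₂ < j₁ : extend R₂ to the right inside R₁
      have hjlt : j₂ < j₁ := by omega
      have hj2ne : j₂ ≠ S.length - 1 := by omega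
      have hneq : per (frag S i₂ (j₂ + 1)) ≠ q := by
        rcases hright2 with h | h
        · exact absurd h hj2ne
        · exact h
      have hij' : i₂ ≤ j₂ + 1 := by omega
      have hj' : j₂ + 1 < S.length := by omega
      have hqper : isPeriod (frag S i₂ (j₂ + 1)) q := by
        rw [isPeriod_frag_iff S hij' hj']
        refine ⟨hq, fun x hx1 hx2 => ?_⟩
        rw [← hpq]
        exact hP x (by omega) (by omega)
      have hle' : per (frag S i₂ (j₂ + 1)) ≤ q := per_le_of_isPeriod _ hqper
      have hmem := (isPeriod_frag_iff S hij' hj').1 (per_isPeriod_frag S hij' hj')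
      have hge' : q ≤ per (frag S i₂ (j₂ + 1)) := by
        apply per_le_of_isPeriod
        rw [isPeriod_frag_iff S hij2 hj2]
        exact ⟨hmem.1, fun x hx1 hx2 => hmem.2 x hx1 (by omega)⟩
      omega
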